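/- If α is a morphism on {a,b}* with α(a) = a^p b, α(b) = a^{p'} b (p,p' ≥ 1, |p−p'| = 1), and g is a primitive binary word, then α(g) is primitive. -/
import Mathlib


/-- `listPow h m` is the word `h` repeated `m` times. -/
def listPow (h : List Bool) (m : ℕ) : List Bool := (List.replicate m h).flatten

/-- A word is primitive if it is not `h^m` for any word `h` and integer `m ≥ 2`. -/
def Primitive (g : List Bool) : Prop := ∀ h m, 2 ≤ m → g ≠ listPow h m

/-- The Sturmian morphism on letters: `a ↦ a^p b`, `b ↦ a^{p'} b`
(`a` is `false`, `b` is `true`). -/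
def alphaMap (p p' : ℕ) : Bool → List Bool
  | false => List.replicate p false ++ [true]
  | true  => List.replicate p' false ++ [true]

/-- The Sturmian morphism extended to words. -/
def alpha (p p' : ℕ) (w : List Bool) : List Bool := w.flatMap (alphaMap p p')

/-- A valid parameter pair: `p, p' ≥ 1` and `|p − p'| = 1`. -/
def ValidPair (p p' : ℕ) : Prop := 1 ≤ p ∧ 1 ≤ p' ∧ (p = p' + 1 ∨ p' = p + 1)

/-- A finite binary word is balanced if any two equal-length factors have
`b`-counts differing by at most 1. -/
def BalancedFin (w : List Bool) : Prop :=
  ∀ u v : List Bool, u <:+: w → v <:+: w → u.length = v.length →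
    u.count true ≤ v.count true + 1

/-- The factor of the infinite word `w` of length `n` starting at position `i`. -/
def infFactorAt (w : ℕ → Bool) (i n : ℕ) : List Bool :=
  (List.range n).map (fun k => w (i + k))

/-- `u` is a factor of the infinite word `w`. -/
def InfFactor (u : List Bool) (w : ℕ → Bool) : Prop :=
  ∃ i, u = infFactorAt w i u.length

/-- An infinite binary word is balanced if any two equal-length factors have
`b`-counts differing by at most 1. -/
def BalancedInf (w : ℕ → Bool) : Prop :=
  ∀ u v : List Bool, InfFactor u w → InfFactor v w → u.length = v.length →
    u.count true ≤ v.count true + 1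

/-- Ultimately periodic infinite word. -/
def UltPeriodic (w : ℕ → Bool) : Prop :=
  ∃ N q, 1 ≤ q ∧ ∀ n, N ≤ n → w (n + q) = w n

lemma alphaMap_ne_nil (p p' : ℕ) (c : Bool) : alphaMap p p' c ≠ [] := by
  cases c <;> simp [alphaMap]

lemma alphaMap_eq_block (p p' : ℕ) (c : Bool) :
    ∃ k, alphaMap p p' c = List.replicate k false ++ [true] := by
  cases c
  · exact ⟨p, rfl⟩
  · exact ⟨p', rfl⟩

lemma block_inj (k k' : ℕ) (X Y : List Bool)
    (h : List.replicate k false ++ [true] ++ X = List.replicate k' false ++ [true] ++ Y) :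
    k = k' ∧ X = Y := by
  induction k generalizing k' with
  | zero => cases k' with
    | zero => simpa using h
    | succ n => simp [List.replicate_succ] at h
  | succ n ih =>
    cases k' with
    | zero => simp [List.replicate_succ] at h
    | succ n' =>
      simp only [List.replicate_succ, List.cons_append, List.cons.injEq] at h
      obtain ⟨hk, hXY⟩ := ih n' (by simpa using h.2)
      exact ⟨by omega, hXY⟩

lemma alpha_cons (p p' : ℕ) (c : Bool) (g : List Bool) :
    alpha p p' (c :: g) = alphaMap p p' c ++ alpha p p' g := by
  simp [alpha]

lemma alpha_eq_nil (p p' : ℕ) (g : List Bool) (h : alpha p p' g = []) : g = [] := by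
  cases g with
  | nil => rfl
  | cons c t =>
    rw [alpha_cons] at h
    exact absurd (List.append_eq_nil_iff.mp h).1 (alphaMap_ne_nil p p' c)

lemma alpha_inj (p p' : ℕ) (hne : p ≠ p') :
    ∀ g1 g2 : List Bool, alpha p p' g1 = alpha p p' g2 → g1 = g2 := by
  intro g1
  induction g1 with
  | nil =>
    intro g2 h
    exact (alpha_eq_nil p p' g2 h.symm).symm
  | cons c t ih =>
    intro g2 h
    cases g2 with
    | nil =>
      exact absurd (alpha_eq_nil p p' (c :: t) h) (by simp)
    | cons d s =>
      rw [alpha_cons, alpha_cons] at h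
      obtain ⟨k, hk⟩ := alphaMap_eq_block p p' c
      obtain ⟨k', hk'⟩ := alphaMap_eq_block p p' d
      rw [hk, hk'] at h
      obtain ⟨hkk, hts⟩ := block_inj k k' _ _ h
      have hcd : c = d := by
        cases c <;> cases d <;> simp_all [alphaMap]
      rw [hcd, ih s hts]

lemma getLast?_ends_true (l : List Bool) (u : List Bool) (h : l = u ++ [true]) :
    l.getLast? = some true := by
  subst h; simp

lemma alpha_getLast (p p' : ℕ) (g : List Bool) (hg : g ≠ []) :
    (alpha p p' g).getLast? = some true := by
  induction g with
  | nil => exact absurd rfl hg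
  | cons c t ih =>
    rw [alpha_cons]
    cases t with
    | nil =>
      obtain ⟨k, hk⟩ := alphaMap_eq_block p p' c
      simp [alpha, hk]
    | cons d s =>
      rw [List.getLast?_append_of_ne_nil]
      · exact ih (by simp)
      · intro h
        exact absurd (alpha_eq_nil p p' _ h) (by simp)

/-- The splitting lemma: a split of `alpha g` at a point ending in `true`
comes from a split of `g`. -/
lemma alpha_split (p p' : ℕ) :
    ∀ g u v : List Bool, alpha p p' g = u ++ v →
      (u = [] ∨ u.getLast? = some true) →
      ∃ g1 g2, g = g1 ++ g2 ∧ alpha p p' g1 = u ∧ alpha p p' g2 = v := by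
  intro g
  induction g with
  | nil =>
    intro u v h _
    have : u = [] ∧ v = [] := List.append_eq_nil_iff.mp ((by simpa [alpha] using h.symm))
    exact ⟨[], [], rfl, by simp [alpha, this.1], by simp [alpha, this.2]⟩
  | cons c t ih =>
    intro u v h hend
    rcases hend with hu | hu
    · exact ⟨[], c :: t, rfl, by simp [alpha, hu], by rw [hu] at h; simpa using h⟩
    · rw [alpha_cons] at h
      rcases List.append_eq_append_iff.mp h with ⟨a', ha1, ha2⟩ | ⟨c', hc1, hc2⟩
      · -- u = alphaMap c ++ a'
        have hend' : a' = [] ∨ a'.getLast? = some true := by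
          by_cases hnil : a' = []
          · exact Or.inl hnil
          · right
            rw [ha1, List.getLast?_append_of_ne_nil _ hnil] at hu
            exact hu
        obtain ⟨g1, g2, hg12, h1, h2⟩ := ih a' v ha2 hend'
        exact ⟨c :: g1, g2, by simp [hg12], by rw [alpha_cons, h1, ha1], h2⟩
      · -- alphaMap c = u ++ c' : show c' = []
        obtain ⟨k, hk⟩ := alphaMap_eq_block p p' c
        have hc'nil : c' = [] := by
          by_contra hne
          -- c' is a nonempty suffix of alphaMap c, so it ends in true
          have hlast : c'.getLast? = some true := by
            have := getLast?_ends_true _ _ hk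
            rw [hc1, List.getLast?_append_of_ne_nil _ hne] at this
            exact this
          have htmem : true ∈ c' := by
            rcases List.getLast?_eq_some_iff.mp hlast with ⟨l', hl'⟩
            rw [hl']; simp
          -- count of true in alphaMap c is 1
          have hcount : (alphaMap p p' c).count true = 1 := by
            rw [hk]; simp [List.count_eq_zero]
          obtain ⟨u', hu'⟩ := List.getLast?_eq_some_iff.mp hu
          rw [hc1, hu'] at hcount
          have h1 : 1 ≤ c'.count true := List.one_le_count_iff.mpr htmem
          simp [List.count_append, List.count_replicate] at hcount
          omega
        subst hc'nil
        simp only [List.append_nil] at hc1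
        refine ⟨[c], t, rfl, ?_, ?_⟩
        · simp [alpha, ← hc1]
        · rw [hc2]; simp [alpha]

lemma listPow_succ (h : List Bool) (m : ℕ) :
    listPow h (m + 1) = h ++ listPow h m := by
  simp [listPow, List.replicate_succ]

lemma listPow_succ' (h : List Bool) (m : ℕ) :
    listPow h (m + 1) = listPow h m ++ h := by
  simp [listPow, List.replicate_succ']

lemma alpha_decode' (p p' : ℕ) (hne : p ≠ p') :
    ∀ (m : ℕ) (g h : List Bool), 1 ≤ m → alpha p p' g = listPow h m →
      (h = [] ∨ h.getLast? = some true) →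
      ∃ g', alpha p p' g' = h ∧ g = listPow g' m := by
  intro m
  induction m with
  | zero => intro g h h1; omega
  | succ n ih =>
    intro g h _ heq hend
    cases n with
    | zero =>
      refine ⟨g, ?_, ?_⟩
      · rw [heq]; simp [listPow]
      · simp [listPow]
    | succ n' =>
      rw [listPow_succ] at heq
      obtain ⟨g1, g2, hg12, h1, h2⟩ := alpha_split p p' g h (listPow h (n' + 1)) heq hend
      obtain ⟨g', hg'1, hg'2⟩ := ih g2 h (by omega) h2 hend
      have hgg : g' = g1 := alpha_inj p p' hne g' g1 (by rw [hg'1, h1])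
      rw [hgg] at hg'2
      exact ⟨g1, h1, by rw [hg12, hg'2]; simp [listPow_succ]⟩

/-- the Sturmian morphism preserves primitivity. -/
theorem stmt1 (p p' : ℕ) (h : ValidPair p p') (g : List Bool) (hg : Primitive g) :
    Primitive (alpha p p' g) := by
  obtain ⟨hp, hp', hpp'⟩ := h
  have hne : p ≠ p' := by omega
  intro w m hm heq
  by_cases hw : w = []
  · subst hw
    have hw0 : listPow ([] : List Bool) m = [] := by simp [listPow]
    rw [hw0] at heq
    have hgnil : g = [] := alpha_eq_nil p p' g heq
    exact hg [] m hm (by rw [hgnil]; simp [listPow])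
  · have hgne : g ≠ [] := by
      intro hgnil
      subst hgnil
      have : listPow w m = [] := by simpa [alpha] using heq.symm
      obtain ⟨m', rfl⟩ : ∃ m', m = m' + 1 := ⟨m - 1, by omega⟩
      rw [listPow_succ] at this
      exact hw (List.append_eq_nil_iff.mp this).1
    have hend : w.getLast? = some true := by
      obtain ⟨m', rfl⟩ : ∃ m', m = m' + 1 := ⟨m - 1, by omega⟩
      have := alpha_getLast p p' g hgne
      rw [heq, listPow_succ', List.getLast?_append_of_ne_nil _ hw] at this
      exact this
    obtain ⟨g', hg'1, hg'2⟩ := alpha_decode' p p' hne m g w (by omega) heq (Or.inr hend)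
    exact hg g' m hm hg'2
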